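/- Let x, z ∈ ℝ with z > x, and let P₊, P₋ ∈ ℝ with 0 < P₊ ≤ 1 and 0 < P₋ < 1. Define f(d) = P₊((x−d)⁺)² + P₋((x−d)⁻)² − (d−z)² for d ∈ ℝ, and set d* = (z − x P₋)/(1 − P₋). Then x − d* < 0, and sup_{d∈ℝ} f(d) = f(d*) = (P₋/(1−P₋)) (z−x)². -/

import Mathlib

/-- the Lagrange-duality maximization `sup_d [V(0,x;d) − (d−z)²]` is attained at
`d* = (z − x P₋)/(1 − P₋)`, with `x − d* < 0` and maximal value `(P₋/(1−P₋))(z−x)²`. -/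
theorem stmt5 (x z : ℝ) (hxz : x < z) (Pp Pm : ℝ)
    (hPp : 0 < Pp) (hPp1 : Pp ≤ 1) (hPm : 0 < Pm) (hPm1 : Pm < 1) :
    let f : ℝ → ℝ := fun d =>
      Pp * (max (x - d) 0) ^ 2 + Pm * (max (-(x - d)) 0) ^ 2 - (d - z) ^ 2
    let dstar : ℝ := (z - x * Pm) / (1 - Pm)
    x - dstar < 0 ∧ IsGreatest (Set.range f) (f dstar) ∧
      f dstar = Pm / (1 - Pm) * (z - x) ^ 2 := by
  intro f dstar
  have h1 : (0:ℝ) < 1 - Pm := by linarith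
  have hds : x - dstar = (x - z) / (1 - Pm) := by
    simp only [dstar]
    field_simp [h1.ne']
    ring
  have hneg : x - dstar < 0 := by
    rw [hds]
    exact div_neg_of_neg_of_pos (by linarith) h1
  have hmax1 : max (x - dstar) 0 = 0 := max_eq_right (le_of_lt hneg)
  have hmax2 : max (-(x - dstar)) 0 = -(x - dstar) := max_eq_left (by linarith)
  have hval : f dstar = Pm / (1 - Pm) * (z - x) ^ 2 := by
    show Pp * (max (x - dstar) 0) ^ 2 + Pm * (max (-(x - dstar)) 0) ^ 2 - (dstar - z) ^ 2
        = Pm / (1 - Pm) * (z - x) ^ 2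
    rw [hmax1, hmax2]
    have hds2 : dstar - z = Pm * (z - x) / (1 - Pm) := by
      simp only [dstar]; field_simp [h1.ne']; ring
    rw [hds, hds2]
    field_simp
    ring
  refine ⟨hneg, ⟨⟨dstar, rfl⟩, ?_⟩, hval⟩
  rintro y ⟨d, rfl⟩
  rw [hval]
  have hM : f d ≤ Pm / (1 - Pm) * (z - x) ^ 2 := by
    have hMnn : 0 ≤ Pm / (1 - Pm) * (z - x) ^ 2 :=
      mul_nonneg (le_of_lt (div_pos hPm h1)) (sq_nonneg _)
    rcases le_total d x with hdx | hdx
    · have m1 : max (x - d) 0 = x - d := max_eq_left (by linarith)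
      have m2 : max (-(x - d)) 0 = 0 := max_eq_right (by linarith)
      show Pp * (max (x - d) 0) ^ 2 + Pm * (max (-(x - d)) 0) ^ 2 - (d - z) ^ 2
          ≤ Pm / (1 - Pm) * (z - x) ^ 2
      rw [m1, m2]
      nlinarith [sq_nonneg (x - d), mul_nonneg (sub_nonneg.mpr hdx) (le_of_lt (sub_pos.mpr hxz))]
    · have m1 : max (x - d) 0 = 0 := max_eq_right (by linarith)
      have m2 : max (-(x - d)) 0 = -(x - d) := max_eq_left (by linarith)
      show Pp * (max (x - d) 0) ^ 2 + Pm * (max (-(x - d)) 0) ^ 2 - (d - z) ^ 2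
          ≤ Pm / (1 - Pm) * (z - x) ^ 2
      rw [m1, m2]
      rw [div_mul_eq_mul_div, le_div_iff₀ h1]
      nlinarith [sq_nonneg ((1 - Pm) * d - (z - x * Pm))]
  exact hM
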